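/- Let $x \in H^1([0,T],\mathbb{R})$ with $x(0)=0$, let $t_* \in [0,T]$ be a point where $\delta := \max_{[0,t_*]} x$ is attained (with $\delta \ge 0$), and define $\tilde x(t) = -|x(t)|$ for $t \in [0,t_*]$ (reflecting the positive part) and $\tilde x(t) = x(t) - 2\delta$ for $t \in [t_*,T]$. If $x(t_*)=\delta$, then $\tilde x \in H^1([0,T],\mathbb{R})$, $\tilde x(t) \le 0$ for all $t \in [0,t_*]$, $|\dot{\tilde x}(t)| = |\dot x(t)|$ for a.e. $t$, and $\tilde x(t) \le x(t)$ for all $t \in [0,T]$. -/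

import Mathlib

open MeasureTheory Set

/-- The reflection-and-shift deformation of Lemma 2.5: reflecting the positive part of
`x` on `[0,t*]` and shifting by `-2δ` afterwards yields a function in `H¹` which is
nonpositive on `[0,t*]`, has the same speed a.e., and lies below `x`. -/
theorem stmt7 (T tstar δ : ℝ) (hT : 0 < T) (x : ℝ → ℝ)
    (hcont : ContinuousOn x (Icc 0 T))
    (hx0 : x 0 = 0)
    (hts : tstar ∈ Icc (0:ℝ) T)
    (hδ : 0 ≤ δ)
    (hmax : ∀ t ∈ Icc (0:ℝ) tstar, x t ≤ δ)
    (hattain : x tstar = δ) :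
    ContinuousOn (fun t => if t ≤ tstar then -|x t| else x t - 2 * δ) (Icc 0 T) ∧
    (∀ t ∈ Icc (0:ℝ) tstar, (if t ≤ tstar then -|x t| else x t - 2 * δ) ≤ 0) ∧
    (∀ᵐ t ∂(volume.restrict (Icc (0:ℝ) T)),
      |deriv (fun s => if s ≤ tstar then -|x s| else x s - 2 * δ) t| = |deriv x t|) ∧
    (∀ t ∈ Icc (0:ℝ) T, (if t ≤ tstar then -|x t| else x t - 2 * δ) ≤ x t) := by
  set f : ℝ → ℝ := fun t => if t ≤ tstar then -|x t| else x t - 2 * δ with hfdef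
  have habs : |x tstar| = δ := by rw [hattain, abs_of_nonneg hδ]
  -- Part 1: continuity
  have hcontf : ContinuousOn f (Icc 0 T) := by
    intro t ht
    have hsub : Icc (0:ℝ) T ⊆ (Icc 0 T ∩ Iic tstar) ∪ (Icc 0 T ∩ Ici tstar) := by
      intro s hs
      by_cases h : s ≤ tstar
      · exact Or.inl ⟨hs, h⟩
      · exact Or.inr ⟨hs, le_of_not_ge h⟩
    refine (ContinuousWithinAt.union ?_ ?_).mono hsub
    · by_cases h : t ≤ tstar
      · have hg : ContinuousWithinAt (fun s => -|x s|) (Icc 0 T ∩ Iic tstar) t :=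
          ((hcont t ht).mono inter_subset_left).abs.neg
        refine hg.congr (fun s hs => ?_) ?_
        · have h2 : s ≤ tstar := hs.2
          simp [hfdef, h2]
        · simp [hfdef, h]
      · refine continuousWithinAt_of_notMem_closure (fun hcl => ?_)
        have : t ∈ Iic tstar := isClosed_Iic.closure_subset
          ((closure_mono inter_subset_right) hcl)
        exact h this
    · by_cases h : tstar ≤ t
      · have hg : ContinuousWithinAt (fun s => x s - 2 * δ) (Icc 0 T ∩ Ici tstar) t :=
          ((hcont t ht).mono inter_subset_left).sub continuousWithinAt_const
        have heq : ∀ s ∈ Icc (0:ℝ) T ∩ Ici tstar, f s = x s - 2 * δ := by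
          intro s hs
          by_cases h' : s ≤ tstar
          · have : s = tstar := le_antisymm h' hs.2
            subst this
            simp [hfdef, hattain, abs_of_nonneg hδ]
            ring
          · simp [hfdef, h']
        refine hg.congr heq ?_
        by_cases h' : t ≤ tstar
        · have : t = tstar := le_antisymm h' h
          subst this
          simp [hfdef, hattain, abs_of_nonneg hδ]
          ring
        · simp [hfdef, h']
      · refine continuousWithinAt_of_notMem_closure (fun hcl => ?_)
        have : t ∈ Ici tstar := isClosed_Ici.closure_subset
          ((closure_mono inter_subset_right) hcl)
        exact h this
  refine ⟨hcontf, ?_, ?_, ?_⟩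
  -- Part 2: nonpositive on [0, tstar]
  · intro t ht
    simp only [if_pos ht.2]
    exact neg_nonpos.mpr (abs_nonneg _)
  -- Part 3: same speed a.e.
  · set Z : Set ℝ := {t | x t = 0 ∧ DifferentiableAt ℝ x t ∧ deriv x t ≠ 0} with hZdef
    have hZc : Z.Countable := by
      have key : ∀ t ∈ Z, ({t} : Set ℝ) ∈ nhdsWithin t Z := by
        rintro t ⟨h0, hdx, hne⟩
        have hs := hasDerivAt_iff_tendsto_slope.1 hdx.hasDerivAt
        have hev : ∀ᶠ s in nhdsWithin t {t}ᶜ, slope x t s ≠ 0 := by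
          filter_upwards [hs (isOpen_compl_singleton.mem_nhds hne)] with s hs'
          exact hs'
        have hev2 : ∀ᶠ s in nhdsWithin t {t}ᶜ, s ∉ Z := by
          filter_upwards [hev, self_mem_nhdsWithin] with s hs' hs''
          intro hsZ
          apply hs'
          rw [slope_def_field, hsZ.1, h0]
          simp
        rw [eventually_nhdsWithin_iff] at hev2
        obtain ⟨U, hU, hUopen, htU⟩ := _root_.mem_nhds_iff.1 hev2
        rw [mem_nhdsWithin]
        refine ⟨U, hUopen, htU, ?_⟩
        rintro s ⟨hsU, hsZ⟩
        by_contra hst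
        exact (hU hsU) (by simpa using hst) hsZ
      obtain ⟨c, hcZ, hcount, hcover⟩ :=
        TopologicalSpace.countable_cover_nhdsWithin (f := fun t => ({t} : Set ℝ)) key
      refine hcount.mono ?_
      intro s hs
      simpa using hcover hs
    have hbadc : ({0, T, tstar} ∪ Z : Set ℝ).Countable :=
      (Set.toFinite ({0, T, tstar} : Set ℝ)).countable.union hZc
    have hbadnull : volume ({0, T, tstar} ∪ Z : Set ℝ) = 0 :=
      hbadc.measure_zero _
    have hae : ∀ᵐ t ∂(volume.restrict (Icc (0:ℝ) T)), t ∉ ({0, T, tstar} ∪ Z : Set ℝ) :=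
      ae_restrict_of_ae (measure_eq_zero_iff_ae_notMem.mp hbadnull)
    have hmem : ∀ᵐ t ∂(volume.restrict (Icc (0:ℝ) T)), t ∈ Icc (0:ℝ) T :=
      ae_restrict_mem measurableSet_Icc
    filter_upwards [hae, hmem] with t htbad htmem
    have hne0 : t ≠ 0 := fun h => htbad (by simp [h])
    have hneT : t ≠ T := fun h => htbad (by simp [h])
    have hnets : t ≠ tstar := fun h => htbad (by simp [h])
    have htZ : t ∉ Z := fun h => htbad (Or.inr h)
    have ht0 : 0 < t := lt_of_le_of_ne htmem.1 (Ne.symm hne0)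
    have htT : t < T := lt_of_le_of_ne htmem.2 hneT
    rcases lt_or_gt_of_ne hnets with hlt | hgt
    · -- t < tstar : f = -|x| near t
      have hev : f =ᶠ[nhds t] (fun s => -|x s|) := by
        filter_upwards [Iio_mem_nhds hlt] with s hs
        simp [hfdef, le_of_lt (Set.mem_Iio.mp hs)]
      rw [hev.deriv_eq]
      rcases lt_trichotomy (x t) 0 with hneg | hzero | hpos
      · have hc : ContinuousAt x t := hcont.continuousAt (Icc_mem_nhds ht0 htT)
        have hev2 : (fun s => -|x s|) =ᶠ[nhds t] x := by
          filter_upwards [hc (Iio_mem_nhds hneg)] with s hs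
          simp only [Set.mem_preimage, Set.mem_Iio] at hs
          rw [abs_of_nonpos (le_of_lt hs), neg_neg]
        rw [hev2.deriv_eq]
      · -- x t = 0
        have hd1 : deriv (fun s => -|x s|) t = 0 := by
          apply IsLocalMax.deriv_eq_zero
          refine Filter.Eventually.of_forall (fun s => ?_)
          simp only [hzero, abs_zero, neg_zero]
          exact neg_nonpos.mpr (abs_nonneg _)
        have hd2 : deriv x t = 0 := by
          by_cases hdx : DifferentiableAt ℝ x t
          · by_contra hne
            exact htZ ⟨hzero, hdx, hne⟩
          · exact deriv_zero_of_not_differentiableAt hdx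
        rw [hd1, hd2]
      · have hc : ContinuousAt x t := hcont.continuousAt (Icc_mem_nhds ht0 htT)
        have hev2 : (fun s => -|x s|) =ᶠ[nhds t] (fun s => -x s) := by
          filter_upwards [hc (Ioi_mem_nhds hpos)] with s hs
          simp only [Set.mem_preimage, Set.mem_Ioi] at hs
          rw [abs_of_pos hs]
        rw [hev2.deriv_eq, deriv.fun_neg, abs_neg]
    · -- tstar < t : f = x - 2δ near t
      have hev : f =ᶠ[nhds t] (fun s => x s - 2 * δ) := by
        filter_upwards [Ioi_mem_nhds hgt] with s hs
        simp [hfdef, not_le.mpr (Set.mem_Ioi.mp hs)]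
      rw [hev.deriv_eq, deriv_sub_const]
  -- Part 4: f ≤ x
  · intro t ht
    by_cases h : t ≤ tstar
    · simp only [if_pos h]
      exact neg_abs_le _
    · simp only [if_neg h]
      linarith
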